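/- Let A be an n×m real matrix with no zero rows and no zero columns, let k : Fin n → ℕ₊ and l : Fin m → ℕ₊, and let A' be the split matrix of A with multiplicities k and l (rows indexed by (i,s), s ∈ Fin k_i, columns by (j,t), t ∈ Fin l_j, entry a_{ij}/(k_i·l_j)). Let Ã be the n×m matrix with entries ã_{ij} = a_{ij}/(√(k_i)·√(l_j)). Then ‖A'‖ = ‖Ã‖, where ‖·‖ is the ℓ²→ℓ² operator norm; consequently √(n'·m')·‖A'‖ = ‖Ã‖·‖w‖·‖v‖, where n' = Σᵢ k_i, m' = Σⱼ l_j, w ∈ ℝⁿ has w_i = √(k_i), and v ∈ ℝ^m has v_j = √(l_j). -/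

import Mathlib

open scoped BigOperators

/-- The ℓ²→ℓ² operator norm of a real matrix. -/
noncomputable def l2OpNorm {α β : Type*} [Fintype α] [Fintype β] [DecidableEq β]
    (A : Matrix α β ℝ) : ℝ :=
  ‖LinearMap.toContinuousLinearMap (Matrix.toEuclideanLin A)‖

/-- The ∞→1 norm of a real matrix: `max_{x ∈ {-1,1}ⁿ, y ∈ {-1,1}^m} xᵀ A y`. -/
noncomputable def normInftyOne {α β : Type*} [Fintype α] [Fintype β] (A : Matrix α β ℝ) : ℝ :=
  ⨆ p : (α → Bool) × (β → Bool),
    ∑ i, ∑ j, (if p.1 i then (1:ℝ) else -1) * A i j * (if p.2 j then (1:ℝ) else -1)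

/-- The Grothendieck norm: sup over `k` and families of unit vectors of `Σ a_{ij} ⟨p_i, q_j⟩`. -/
noncomputable def grothendieckNorm {α β : Type*} [Fintype α] [Fintype β]
    (A : Matrix α β ℝ) : ℝ :=
  sSup { r : ℝ | ∃ (k : ℕ) (p : α → EuclideanSpace ℝ (Fin k)) (q : β → EuclideanSpace ℝ (Fin k)),
    (∀ i, ‖p i‖ = 1) ∧ (∀ j, ‖q j‖ = 1) ∧
    r = ∑ i, ∑ j, A i j * (inner ℝ (p i) (q j) : ℝ) }

/-- The matrix obtained from `A` by splitting row `i` into `k i` equal rows and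
column `j` into `l j` equal columns. -/
noncomputable def splitMatrix {n m : ℕ} (A : Matrix (Fin n) (Fin m) ℝ)
    (k : Fin n → ℕ+) (l : Fin m → ℕ+) :
    Matrix ((i : Fin n) × Fin (k i : ℕ)) ((j : Fin m) × Fin (l j : ℕ)) ℝ :=
  fun p q => A p.1 q.1 / (((k p.1 : ℕ) : ℝ) * ((l q.1 : ℕ) : ℝ))

open scoped Matrix Matrix.Norms.L2Operator

lemma l2OpNorm_eq_norm {α β : Type*} [Fintype α] [Fintype β] [DecidableEq β]
    (A : Matrix α β ℝ) : l2OpNorm A = ‖A‖ := rfl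

lemma l2_norm_one_le {β : Type*} [Fintype β] [DecidableEq β] :
    ‖(1 : Matrix β β ℝ)‖ ≤ 1 := by
  rw [Matrix.l2_opNorm_def]
  have h1 : Matrix.toEuclideanLin (1 : Matrix β β ℝ) = LinearMap.id := by
    apply LinearMap.ext; intro x
    ext i
    simp [Matrix.toEuclideanLin_apply]
  rw [LinearEquiv.trans_apply, h1]
  exact ContinuousLinearMap.norm_id_le

lemma norm_le_one_of_isometry {α β : Type*} [Fintype α] [Fintype β]
    [DecidableEq α] [DecidableEq β] (M : Matrix α β ℝ) (h : Mᴴ * M = 1) :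
    ‖M‖ ≤ 1 := by
  have h2 := Matrix.l2_opNorm_conjTranspose_mul_self M
  rw [h] at h2
  have h3 : ‖(1 : Matrix β β ℝ)‖ ≤ 1 := l2_norm_one_le
  nlinarith [norm_nonneg M]

/-- If `A'` is the split matrix of `A` with multiplicities `k, l`, and
`Ã` has entries `a_{ij}/(√(k_i)·√(l_j))`, then `‖A'‖ = ‖Ã‖`; consequently
`√(n'·m')·‖A'‖ = ‖Ã‖·‖w‖·‖v‖` where `n' = Σᵢ kᵢ`, `m' = Σⱼ lⱼ`, `wᵢ = √(kᵢ)`, `vⱼ = √(lⱼ)`. -/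
theorem l2OpNorm_splitMatrix (n m : ℕ) (A : Matrix (Fin n) (Fin m) ℝ)
    (hrow : ∀ i, ∃ j, A i j ≠ 0) (hcol : ∀ j, ∃ i, A i j ≠ 0)
    (k : Fin n → ℕ+) (l : Fin m → ℕ+)
    (Atil : Matrix (Fin n) (Fin m) ℝ)
    (hAtil : ∀ i j, Atil i j = A i j / (Real.sqrt ((k i : ℕ) : ℝ) * Real.sqrt ((l j : ℕ) : ℝ)))
    (w : Fin n → ℝ) (hw : ∀ i, w i = Real.sqrt ((k i : ℕ) : ℝ))
    (v : Fin m → ℝ) (hv : ∀ j, v j = Real.sqrt ((l j : ℕ) : ℝ)) :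
    l2OpNorm (splitMatrix A k l) = l2OpNorm Atil ∧
    Real.sqrt ((∑ i, ((k i : ℕ) : ℝ)) * (∑ j, ((l j : ℕ) : ℝ))) * l2OpNorm (splitMatrix A k l)
      = l2OpNorm Atil * Real.sqrt (∑ i, w i ^ 2) * Real.sqrt (∑ j, v j ^ 2) := by
  classical
  have hkpos : ∀ i, (0:ℝ) < ((k i : ℕ) : ℝ) := fun i => by exact_mod_cast (k i).pos
  have hlpos : ∀ j, (0:ℝ) < ((l j : ℕ) : ℝ) := fun j => by exact_mod_cast (l j).pos
  set P : Matrix ((i : Fin n) × Fin (k i : ℕ)) (Fin n) ℝ :=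
    fun p i' => if p.1 = i' then 1 / Real.sqrt ((k p.1 : ℕ) : ℝ) else 0 with hP
  set R : Matrix ((j : Fin m) × Fin (l j : ℕ)) (Fin m) ℝ :=
    fun q j' => if q.1 = j' then 1 / Real.sqrt ((l q.1 : ℕ) : ℝ) else 0 with hR
  have hPiso : Pᴴ * P = 1 := by
    ext i i'
    simp only [Matrix.mul_apply, Matrix.conjTranspose_apply, star_trivial]
    simp only [Matrix.mul_apply, Matrix.conjTranspose_apply, star_trivial, hP]
    rw [← Finset.univ_sigma_univ, Finset.sum_sigma]
    rcases eq_or_ne i i' with h | h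
    · subst h
      rw [Matrix.one_apply_eq]
      rw [Finset.sum_eq_single i (fun b _ hb => by
          apply Finset.sum_eq_zero; intro s _; simp [hb])
        (fun h => absurd (Finset.mem_univ i) h)]
      simp only [if_pos rfl, if_true, Finset.sum_const, Finset.card_univ, Fintype.card_fin,
        nsmul_eq_mul]
      rw [div_mul_div_comm, one_mul, ← Real.sqrt_mul_self (hkpos i).le]
      field_simp
      rw [Real.sq_sqrt (by positivity)]
    · rw [Matrix.one_apply_ne h]
      apply Finset.sum_eq_zero
      intro b _
      apply Finset.sum_eq_zero
      intro s _
      rcases eq_or_ne b i with rfl | hb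
      · simp [if_neg h]
      · simp [hb]
  have hRiso : Rᴴ * R = 1 := by
    ext j j'
    simp only [Matrix.mul_apply, Matrix.conjTranspose_apply, star_trivial]
    simp only [Matrix.mul_apply, Matrix.conjTranspose_apply, star_trivial, hR]
    rw [← Finset.univ_sigma_univ, Finset.sum_sigma]
    rcases eq_or_ne j j' with h | h
    · subst h
      rw [Matrix.one_apply_eq]
      rw [Finset.sum_eq_single j (fun b _ hb => by
          apply Finset.sum_eq_zero; intro t _; simp [hb])
        (fun h => absurd (Finset.mem_univ j) h)]
      simp only [if_pos rfl, if_true, Finset.sum_const, Finset.card_univ, Fintype.card_fin,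
        nsmul_eq_mul]
      rw [div_mul_div_comm, one_mul, ← Real.sqrt_mul_self (hlpos j).le]
      field_simp
      rw [Real.sq_sqrt (by positivity)]
    · rw [Matrix.one_apply_ne h]
      apply Finset.sum_eq_zero
      intro b _
      apply Finset.sum_eq_zero
      intro t _
      rcases eq_or_ne b j with rfl | hb
      · simp [if_neg h]
      · simp [hb]
  have hPle : ‖P‖ ≤ 1 := norm_le_one_of_isometry P hPiso
  have hRle : ‖R‖ ≤ 1 := norm_le_one_of_isometry R hRiso
  have hPHle : ‖Pᴴ‖ ≤ 1 := by rw [Matrix.l2_opNorm_conjTranspose]; exact hPle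
  have hRHle : ‖Rᴴ‖ ≤ 1 := by rw [Matrix.l2_opNorm_conjTranspose]; exact hRle
  have hfac1 : splitMatrix A k l = P * Atil * Rᴴ := by
    ext ⟨i, s⟩ ⟨j, t⟩
    simp only [Matrix.mul_apply, Matrix.conjTranspose_apply, star_trivial]
    simp only [Matrix.mul_apply, Matrix.conjTranspose_apply, star_trivial, hP, hR,
      ite_mul, mul_ite, zero_mul, mul_zero, Finset.sum_ite_eq, Finset.mem_univ, if_true]
    rw [hAtil]
    show A i j / _ = _
    have hk2 : Real.sqrt ((k i : ℕ) : ℝ) * Real.sqrt ((k i : ℕ) : ℝ) = ((k i : ℕ) : ℝ) :=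
      Real.mul_self_sqrt (hkpos i).le
    have hl2 : Real.sqrt ((l j : ℕ) : ℝ) * Real.sqrt ((l j : ℕ) : ℝ) = ((l j : ℕ) : ℝ) :=
      Real.mul_self_sqrt (hlpos j).le
    rw [show (1 / Real.sqrt ((k i : ℕ) : ℝ)) *
        (A i j / (Real.sqrt ((k i : ℕ) : ℝ) * Real.sqrt ((l j : ℕ) : ℝ))) *
        (1 / Real.sqrt ((l j : ℕ) : ℝ)) =
        A i j / ((Real.sqrt ((k i : ℕ) : ℝ) * Real.sqrt ((k i : ℕ) : ℝ)) *
          (Real.sqrt ((l j : ℕ) : ℝ) * Real.sqrt ((l j : ℕ) : ℝ))) from by ring, hk2, hl2]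
  have hfac2 : Atil = Pᴴ * splitMatrix A k l * R := by
    ext i j
    simp only [Matrix.mul_apply, Matrix.conjTranspose_apply, star_trivial]
    simp only [Matrix.mul_apply, Matrix.conjTranspose_apply, star_trivial, hP, hR,
      ite_mul, mul_ite, zero_mul, mul_zero]
    rw [← Finset.univ_sigma_univ, Finset.sum_sigma]
    rw [Finset.sum_eq_single j (fun b _ hb => by
        apply Finset.sum_eq_zero; intro t _; simp [hb])
      (fun h => absurd (Finset.mem_univ j) h)]
    have hinner : ∀ t : Fin (l j : ℕ),
        (∑ x1 : (i : Fin n) × Fin (k i : ℕ),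
          if x1.fst = i then 1 / Real.sqrt ((k x1.fst : ℕ) : ℝ) * splitMatrix A k l x1 ⟨j, t⟩
          else 0)
        = ((k i : ℕ) : ℝ) * (1 / Real.sqrt ((k i : ℕ) : ℝ) *
            (A i j / (((k i : ℕ) : ℝ) * ((l j : ℕ) : ℝ)))) := by
      intro t
      rw [← Finset.univ_sigma_univ, Finset.sum_sigma]
      rw [Finset.sum_eq_single i (fun b _ hb => by
          apply Finset.sum_eq_zero; intro s _; simp [hb])
        (fun h => absurd (Finset.mem_univ i) h)]
      simp [splitMatrix, Finset.sum_const, Fintype.card_fin, nsmul_eq_mul]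
    simp only [if_pos rfl, hinner, Finset.sum_const, Finset.card_univ, Fintype.card_fin,
      nsmul_eq_mul]
    rw [hAtil]
    have hk2 : Real.sqrt ((k i : ℕ) : ℝ) * Real.sqrt ((k i : ℕ) : ℝ) = ((k i : ℕ) : ℝ) :=
      Real.mul_self_sqrt (hkpos i).le
    have hl2 : Real.sqrt ((l j : ℕ) : ℝ) * Real.sqrt ((l j : ℕ) : ℝ) = ((l j : ℕ) : ℝ) :=
      Real.mul_self_sqrt (hlpos j).le
    have hk0 : Real.sqrt ((k i : ℕ) : ℝ) ≠ 0 := (Real.sqrt_pos.mpr (hkpos i)).ne'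
    have hl0 : Real.sqrt ((l j : ℕ) : ℝ) ≠ 0 := (Real.sqrt_pos.mpr (hlpos j)).ne'
    simp only [if_true]
    field_simp
  have hle1 : ‖splitMatrix A k l‖ ≤ ‖Atil‖ := by
    calc ‖splitMatrix A k l‖ = ‖P * Atil * Rᴴ‖ := by rw [hfac1]
      _ ≤ ‖P * Atil‖ * ‖Rᴴ‖ := Matrix.l2_opNorm_mul _ _
      _ ≤ ‖P * Atil‖ * 1 := mul_le_mul_of_nonneg_left hRHle (norm_nonneg _)
      _ = ‖P * Atil‖ := mul_one _
      _ ≤ ‖P‖ * ‖Atil‖ := Matrix.l2_opNorm_mul _ _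
      _ ≤ 1 * ‖Atil‖ := mul_le_mul_of_nonneg_right hPle (norm_nonneg _)
      _ = ‖Atil‖ := one_mul _
  have hle2 : ‖Atil‖ ≤ ‖splitMatrix A k l‖ := by
    calc ‖Atil‖ = ‖Pᴴ * splitMatrix A k l * R‖ := by rw [← hfac2]
      _ ≤ ‖Pᴴ * splitMatrix A k l‖ * ‖R‖ := Matrix.l2_opNorm_mul _ _
      _ ≤ ‖Pᴴ * splitMatrix A k l‖ * 1 := mul_le_mul_of_nonneg_left hRle (norm_nonneg _)
      _ = ‖Pᴴ * splitMatrix A k l‖ := mul_one _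
      _ ≤ ‖Pᴴ‖ * ‖splitMatrix A k l‖ := Matrix.l2_opNorm_mul _ _
      _ ≤ 1 * ‖splitMatrix A k l‖ := mul_le_mul_of_nonneg_right hPHle (norm_nonneg _)
      _ = ‖splitMatrix A k l‖ := one_mul _
  have hmain : l2OpNorm (splitMatrix A k l) = l2OpNorm Atil := by
    rw [l2OpNorm_eq_norm, l2OpNorm_eq_norm]
    exact le_antisymm hle1 hle2
  refine ⟨hmain, ?_⟩
  have hwsum : ∑ i, w i ^ 2 = ∑ i, ((k i : ℕ) : ℝ) :=
    Finset.sum_congr rfl fun i _ => by rw [hw, Real.sq_sqrt (hkpos i).le]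
  have hvsum : ∑ j, v j ^ 2 = ∑ j, ((l j : ℕ) : ℝ) :=
    Finset.sum_congr rfl fun j _ => by rw [hv, Real.sq_sqrt (hlpos j).le]
  rw [hmain, hwsum, hvsum,
    Real.sqrt_mul (Finset.sum_nonneg fun i _ => (hkpos i).le)]
  ring
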